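/- Let G be a finite group and a coprime to |G|. Then the sign of the permutation g ↦ g^a of G equals the product over divisors d of |G| with d ≠ 1, 2 of ((-1)^{φ(d)/o_d(a)})^{G(d)/φ(d)}, where φ is Euler's totient, o_d(a) the multiplicative order of a mod d, and G(d) the number of elements of G of order d. -/

import Mathlib

open Finset

lemma totient_dvd_card_orderOf {G : Type*} [Group G] [Fintype G] [DecidableEq G] (d : ℕ) :
    d.totient ∣ #(univ.filter (fun g : G => orderOf g = d)) := by
  classical
  set s := univ.filter (fun g : G => orderOf g = d) with hs
  have hcard := Finset.card_eq_sum_card_fiberwise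
    (f := fun g : G => Subgroup.zpowers g) (s := s) (t := s.image (fun g => Subgroup.zpowers g))
    (fun x hx => Finset.mem_image_of_mem _ hx)
  have hfib : ∀ H ∈ s.image (fun g => Subgroup.zpowers g),
      #(s.filter (fun g => Subgroup.zpowers g = H)) = d.totient := by
    intro H hH
    obtain ⟨g₀, hg₀, rfl⟩ := Finset.mem_image.1 hH
    have hg₀d : orderOf g₀ = d := (Finset.mem_filter.1 hg₀).2
    have key : ∀ g : G, orderOf g = d → g ∈ Subgroup.zpowers g₀ →
        Subgroup.zpowers g = Subgroup.zpowers g₀ := by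
      intro g hgd hmem
      refine Subgroup.eq_of_le_of_card_ge (Subgroup.zpowers_le.2 hmem) ?_
      rw [Nat.card_zpowers, Nat.card_zpowers, hgd, hg₀d]
    have hset : s.filter (fun g => Subgroup.zpowers g = Subgroup.zpowers g₀)
        = univ.filter (fun g : G => g ∈ Subgroup.zpowers g₀ ∧ orderOf g = d) := by
      ext g
      simp only [hs, Finset.mem_filter, Finset.mem_univ, true_and]
      constructor
      · rintro ⟨hgd, hEq⟩
        exact ⟨hEq ▸ Subgroup.mem_zpowers g, hgd⟩
      · rintro ⟨hmem, hgd⟩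
        exact ⟨hgd, key g hgd hmem⟩
    rw [hset]
    have e : {g : G // g ∈ Subgroup.zpowers g₀ ∧ orderOf g = d}
        ≃ {h : Subgroup.zpowers g₀ // orderOf h = d} :=
      { toFun := fun x => ⟨⟨x.1, x.2.1⟩, by rw [Subgroup.orderOf_mk]; exact x.2.2⟩
        invFun := fun h => ⟨h.1.1, h.1.2, by rw [Subgroup.orderOf_coe]; exact h.2⟩
        left_inv := fun x => rfl
        right_inv := fun h => rfl }
    rw [← Fintype.card_subtype, Fintype.card_congr e, Fintype.card_subtype]
    have : IsCyclic (Subgroup.zpowers g₀) := by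
      refine ⟨⟨⟨g₀, Subgroup.mem_zpowers g₀⟩, fun x => ?_⟩⟩
      obtain ⟨k, hk⟩ := Subgroup.mem_zpowers_iff.mp x.2
      exact Subgroup.mem_zpowers_iff.mpr ⟨k, Subtype.ext (by simpa using hk)⟩
    have hd : d ∣ Fintype.card (Subgroup.zpowers g₀) := by
      rw [← Nat.card_eq_fintype_card, Nat.card_zpowers, hg₀d]
    exact IsCyclic.card_orderOf_eq_totient hd
  rw [hcard, Finset.sum_congr rfl hfib, Finset.sum_const, smul_eq_mul]
  exact dvd_mul_left _ _

lemma parity_step (o p m N : ℕ) (ho : 2 ≤ o) (hp0 : 0 < p) (hop : o ∣ p) (hpm : p ∣ m)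
    (hpe : Even p) (hmN : m = N * o) :
    (-(-1 : ℤ) ^ o) ^ N = ((-1 : ℤ) ^ (p / o)) ^ (m / p) := by
  obtain ⟨t, ht⟩ := hop
  obtain ⟨s, hs⟩ := hpm
  have ho0 : 0 < o := lt_of_lt_of_le two_pos ho
  have hto : p / o = t := by rw [ht, Nat.mul_div_cancel_left _ ho0]
  have hNts : N = t * s := by
    have : N * o = (t * s) * o := by rw [← hmN, hs, ht]; ring
    exact Nat.eq_of_mul_eq_mul_right ho0 this
  have hmp : m / p = s := by rw [hs, Nat.mul_div_cancel_left _ hp0]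
  rcases Nat.even_or_odd o with he | hod
  · have h1 : (-(-1 : ℤ) ^ o) = -1 := by rw [he.neg_one_pow]
    rw [h1, hto, hmp, hNts]
    rcases Nat.even_or_odd t with hte | hto'
    · rw [hte.neg_one_pow, one_pow, (hte.mul_right s).neg_one_pow]
    · rw [hto'.neg_one_pow]
      rcases Nat.even_or_odd s with hse | hso
      · rw [(hse.mul_left t).neg_one_pow, hse.neg_one_pow]
      · rw [(hto'.mul hso).neg_one_pow, hso.neg_one_pow]
  · have h1 : (-(-1 : ℤ) ^ o) = 1 := by rw [hod.neg_one_pow]; norm_num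
    have hte : Even t := by
      have h2 : Even (o * t) := ht ▸ hpe
      rcases Nat.even_mul.1 h2 with h | h
      · exact absurd h (Nat.not_even_iff_odd.2 hod)
      · exact h
    rw [h1, one_pow, hto, hte.neg_one_pow, one_pow]

theorem sign_powMap_formula (G : Type*) [Group G] [Fintype G] [DecidableEq G] (a : ℤ)
    (ha : Int.gcd a (Fintype.card G) = 1)
    (σ : Equiv.Perm G) (hσ : ∀ g : G, σ g = g ^ a) :
    ((Equiv.Perm.sign σ : ℤˣ) : ℤ) =
      ∏ d ∈ (Fintype.card G).divisors.filter (fun d => d ≠ 1 ∧ d ≠ 2),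
        ((-1 : ℤ) ^ (d.totient / orderOf ((a : ZMod d)))) ^
          (Nat.card {g : G // orderOf g = d} / d.totient) := by
  classical
  haveI : Inhabited G := ⟨1⟩
  set n := Fintype.card G with hn
  have hn0 : 0 < n := Fintype.card_pos
  set b : ℕ := (a % n).toNat with hbdef
  have hbz : (b : ℤ) = a % n := Int.toNat_of_nonneg (Int.emod_nonneg a (by exact_mod_cast hn0.ne'))
  -- a and b agree in ZMod d for d ∣ n
  have hmod : ∀ d : ℕ, d ∣ n → ((a : ZMod d) = (b : ZMod d)) := by
    intro d hd
    have h1 : ((a : ZMod d)) = (((b : ℤ) : ZMod d)) := by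
      rw [ZMod.intCast_eq_intCast_iff, hbz]
      exact (Int.emod_emod_of_dvd a (Int.natCast_dvd_natCast.mpr hd)).symm
    simpa using h1
  -- σ is the b-th power map
  have hσb : ∀ g : G, σ g = g ^ b := by
    intro g
    rw [hσ]
    conv_lhs => rw [← Int.mul_ediv_add_emod a n]
    rw [zpow_add, zpow_mul, zpow_natCast, pow_card_eq_one, one_zpow, one_mul, ← hbz, zpow_natCast]
  -- units and coprimality
  have hunit : ∀ d : ℕ, d ∣ n → IsUnit ((b : ZMod d)) := by
    intro d hd
    rw [← hmod d hd]
    have h1 : IsCoprime a (d : ℤ) :=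
      (Int.isCoprime_iff_gcd_eq_one.mpr ha).of_isCoprime_of_dvd_right
        (Int.natCast_dvd_natCast.mpr hd)
    obtain ⟨u, v, huv⟩ := h1
    apply IsUnit.of_mul_eq_one ((u : ZMod d))
    have h2 := congrArg (fun z : ℤ => ((z : ZMod d))) huv
    push_cast at h2
    rw [ZMod.natCast_self, mul_zero, add_zero] at h2
    rw [mul_comm]; exact h2
  have hcop : ∀ d : ℕ, 0 < d → d ∣ n → Nat.Coprime b d := by
    intro d hd0 hd
    haveI : NeZero d := ⟨hd0.ne'⟩
    exact (ZMod.isUnit_iff_coprime b d).mp (hunit d hd)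
  -- order stability under the power map
  have horder : ∀ (g : G) (k : ℕ), orderOf (g ^ b ^ k) = orderOf g := by
    intro g k
    exact Nat.Coprime.orderOf_pow
      (((hcop (orderOf g) (orderOf_pos g) (orderOf_dvd_card)).symm.pow_right k))
  -- iterates of σ
  have hpow : ∀ (k : ℕ) (g : G), (σ ^ k) g = g ^ b ^ k := by
    intro k
    induction k with
    | zero => intro g; simp
    | succ k ih =>
      intro g
      rw [pow_succ', Equiv.Perm.mul_apply, hσb, ih, ← pow_mul, ← pow_succ]
  -- fixed points of iterates
  have hfix : ∀ (g : G) (k : ℕ), (σ ^ k) g = g ↔ orderOf ((b : ZMod (orderOf g))) ∣ k := by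
    intro g k
    rw [hpow, orderOf_dvd_iff_pow_eq_one]
    have h1 : g ^ b ^ k = g ↔ g ^ (b ^ k) = g ^ 1 := by rw [pow_one]
    rw [h1, pow_eq_pow_iff_modEq, ← ZMod.natCast_eq_natCast_iff]
    push_cast
    rfl
  -- same cycle implies same order
  have hsame : ∀ g h : G, σ.SameCycle g h → orderOf h = orderOf g := by
    intro g h hgh
    obtain ⟨i, _, _, hi⟩ := hgh.exists_pow_eq σ
    rw [← hi, hpow]
    exact horder g i
  -- cycle length
  have hcyclen : ∀ g : G, g ∈ σ.support →
      #(σ.cycleOf g).support = orderOf ((b : ZMod (orderOf g))) := by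
    intro g hg
    have hgne : σ g ≠ g := Equiv.Perm.mem_support.1 hg
    have hc : (σ.cycleOf g).IsCycle := σ.isCycle_cycleOf hgne
    rw [← hc.orderOf]
    apply Nat.dvd_antisymm
    · rw [orderOf_dvd_iff_pow_eq_one]
      ext y
      simp only [Equiv.Perm.one_apply]
      by_cases hy : σ.SameCycle g y
      · rw [hy.cycleOf_eq, Equiv.Perm.cycleOf_pow_apply_self, hfix, hsame g y hy]
      · have h2 : σ.cycleOf g y = y := Equiv.Perm.cycleOf_apply_of_not_sameCycle hy
        exact Equiv.Perm.pow_apply_eq_self_of_apply_eq_self h2 _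
    · rw [← hfix, ← Equiv.Perm.cycleOf_pow_apply_self, pow_orderOf_eq_one, Equiv.Perm.one_apply]
  -- sign as a product over cycle factors
  have hsign : ((Equiv.Perm.sign σ : ℤˣ) : ℤ)
      = ∏ c ∈ σ.cycleFactorsFinset, ((Equiv.Perm.sign c : ℤˣ) : ℤ) := by
    conv_lhs => rw [← Equiv.Perm.cycleFactorsFinset_noncommProd σ
      (Equiv.Perm.cycleFactorsFinset_mem_commute σ)]
    rw [Finset.map_noncommProd _ _ _ (Equiv.Perm.sign : Equiv.Perm G →* ℤˣ)]
    rw [Finset.noncommProd_eq_prod]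
    push_cast
    rfl
  -- the order function on cycles
  set D : Equiv.Perm G → ℕ := fun c => orderOf c.support.toList.headI with hDdef
  have hD : ∀ c ∈ σ.cycleFactorsFinset, ∀ x ∈ c.support, orderOf x = D c := by
    intro c hc x hx
    have hne : c.support.toList ≠ [] := by
      intro hnil
      rw [Finset.toList_eq_nil] at hnil
      rw [hnil] at hx
      exact absurd hx (Finset.notMem_empty x)
    have hh : c.support.toList.headI ∈ c.support := by
      rw [← Finset.mem_toList]
      exact List.head!_mem_self hne
    have h1 : c = σ.cycleOf x := Equiv.Perm.cycle_is_cycleOf hx hc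
    have h2 : c.support.toList.headI ∈ (σ.cycleOf x).support := h1 ▸ hh
    rw [hDdef]
    exact (hsame x _ ((Equiv.Perm.mem_support_cycleOf_iff.1 h2).1)).symm
  have hDsupp : ∀ c ∈ σ.cycleFactorsFinset,
      c.support.card = orderOf ((b : ZMod (D c))) := by
    intro c hc
    have hcyc : c.IsCycle := (Equiv.Perm.mem_cycleFactorsFinset_iff.1 hc).1
    obtain ⟨x, hx⟩ := Finset.card_pos.mp (lt_of_lt_of_le two_pos hcyc.two_le_card_support)
    have h1 : c = σ.cycleOf x := Equiv.Perm.cycle_is_cycleOf hx hc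
    have hxsupp : x ∈ σ.support := Equiv.Perm.support_cycleOf_le σ x (h1 ▸ hx)
    have h2 : orderOf x = D c := hD c hc x hx
    conv_lhs => rw [h1]
    rw [hcyclen x hxsupp, h2]
  have hmaps : ∀ c ∈ σ.cycleFactorsFinset, D c ∈ n.divisors := by
    intro c hc
    have hcyc : c.IsCycle := (Equiv.Perm.mem_cycleFactorsFinset_iff.1 hc).1
    obtain ⟨x, hx⟩ := Finset.card_pos.mp (lt_of_lt_of_le two_pos hcyc.two_le_card_support)
    rw [← hD c hc x hx]
    exact Nat.mem_divisors.2 ⟨orderOf_dvd_card, hn0.ne'⟩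
  -- group the product by D
  rw [hsign, ← Finset.prod_fiberwise_of_maps_to hmaps]
  rw [Finset.prod_filter]
  apply Finset.prod_congr rfl
  intro d hd
  have hdn : d ∣ n := (Nat.mem_divisors.1 hd).1
  have hd0 : 0 < d := Nat.pos_of_mem_divisors hd
  haveI : NeZero d := ⟨hd0.ne'⟩
  set o : ℕ := orderOf ((b : ZMod d)) with hodef
  set N : ℕ := #(σ.cycleFactorsFinset.filter (fun c => D c = d)) with hNdef
  -- inner product value
  have hinner : ∏ c ∈ σ.cycleFactorsFinset.filter (fun c => D c = d),
      ((Equiv.Perm.sign c : ℤˣ) : ℤ) = (-(-1 : ℤ) ^ o) ^ N := by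
    have hval : ∀ c ∈ σ.cycleFactorsFinset.filter (fun c => D c = d),
        ((Equiv.Perm.sign c : ℤˣ) : ℤ) = (-(-1 : ℤ) ^ o) := by
      intro c hc
      rw [Finset.mem_filter] at hc
      have hcyc : c.IsCycle := (Equiv.Perm.mem_cycleFactorsFinset_iff.1 hc.1).1
      have hs2 : #c.support = o := by
        rw [hDsupp c hc.1, hc.2]
      rw [hcyc.sign, hs2]
      push_cast
      ring
    rw [Finset.prod_congr rfl hval, Finset.prod_const]
  rw [hinner]
  -- order divides totient
  have hop : o ∣ d.totient := by
    obtain ⟨u, hu⟩ := hunit d hdn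
    rw [hodef, ← hu, orderOf_units, ← ZMod.card_units_eq_totient]
    exact orderOf_dvd_card
  have ho0 : o ≠ 0 := by
    obtain ⟨u, hu⟩ := hunit d hdn
    rw [hodef, ← hu, orderOf_units]
    exact (orderOf_pos u).ne'
  -- element count
  set m : ℕ := #(univ.filter (fun g : G => orderOf g = d)) with hmdef
  have hpm : d.totient ∣ m := totient_dvd_card_orderOf d
  have hmcard : Nat.card {g : G // orderOf g = d} = m := by
    rw [Nat.card_eq_fintype_card, Fintype.card_subtype]
  have hgsupp' : ∀ g : G, orderOf g = d → o ≠ 1 → g ∈ σ.support := by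
    intro g hgd hone
    rw [Equiv.Perm.mem_support]
    intro hfix1
    have h1 : (σ ^ 1) g = g := by simpa using hfix1
    rw [hfix g 1, hgd] at h1
    exact hone (Nat.dvd_one.mp h1)
  by_cases ho1 : o = 1
  · -- no cycles over d
    have hN0 : N = 0 := by
      rw [hNdef, Finset.card_eq_zero, Finset.filter_eq_empty_iff]
      intro c hc hDc
      have h2 := hDsupp c hc
      rw [hDc] at h2
      have hcyc : c.IsCycle := (Equiv.Perm.mem_cycleFactorsFinset_iff.1 hc).1
      have h3 := hcyc.two_le_card_support
      rw [h2, ← hodef, ho1] at h3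
      omega
    rw [hN0, pow_zero]
    by_cases hd12 : d ≠ 1 ∧ d ≠ 2
    · rw [if_pos hd12]
      have hd2 : 2 < d := by omega
      have hpe : Even d.totient := Nat.totient_even hd2
      rw [hmod d hdn, ← hodef, ho1, Nat.div_one, hpe.neg_one_pow, one_pow]
    · rw [if_neg hd12]
  · have hd12 : d ≠ 1 ∧ d ≠ 2 := by
      constructor
      · rintro rfl
        rw [Nat.totient_one] at hop
        exact ho1 (Nat.dvd_one.mp hop)
      · rintro rfl
        rw [Nat.totient_two] at hop
        exact ho1 (Nat.dvd_one.mp hop)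
    have ho2 : 2 ≤ o := by omega
    have hd2 : 2 < d := by
      obtain ⟨h1, h2⟩ := hd12
      omega
    -- element count equation m = N * o
    have hcount : m = N * o := by
      have hmaps2 : ∀ g ∈ univ.filter (fun g : G => orderOf g = d),
          σ.cycleOf g ∈ σ.cycleFactorsFinset.filter (fun c => D c = d) := by
        intro g hg
        rw [Finset.mem_filter] at hg
        have hgsupp : g ∈ σ.support := hgsupp' g hg.2 ho1
        have h1 : σ.cycleOf g ∈ σ.cycleFactorsFinset :=
          Equiv.Perm.cycleOf_mem_cycleFactorsFinset_iff.mpr hgsupp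
        rw [Finset.mem_filter]
        refine ⟨h1, ?_⟩
        have hgmem : g ∈ (σ.cycleOf g).support :=
          Equiv.Perm.mem_support_cycleOf_iff.mpr ⟨Equiv.Perm.SameCycle.refl _ _, hgsupp⟩
        rw [← hD _ h1 g hgmem, hg.2]
      have hfibcard : ∀ c ∈ σ.cycleFactorsFinset.filter (fun c => D c = d),
          #((univ.filter (fun g : G => orderOf g = d)).filter (fun g => σ.cycleOf g = c)) = o := by
        intro c hc
        rw [Finset.mem_filter] at hc
        have hfiber : (univ.filter (fun g : G => orderOf g = d)).filter
            (fun g => σ.cycleOf g = c) = c.support := by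
          ext g
          simp only [Finset.mem_filter, Finset.mem_univ, true_and]
          constructor
          · rintro ⟨hgd, hcg⟩
            rw [← hcg]
            exact Equiv.Perm.mem_support_cycleOf_iff.mpr
              ⟨Equiv.Perm.SameCycle.refl _ _, hgsupp' g hgd ho1⟩
          · intro hgc
            have h1 : c = σ.cycleOf g := Equiv.Perm.cycle_is_cycleOf hgc hc.1
            exact ⟨(hD c hc.1 g hgc).trans hc.2, h1.symm⟩
        rw [hfiber, hDsupp c hc.1, hc.2]
      rw [hmdef, Finset.card_eq_sum_card_fiberwise hmaps2,
        Finset.sum_congr rfl hfibcard, Finset.sum_const, smul_eq_mul]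
    rw [if_pos hd12, hmcard, hmod d hdn]
    exact parity_step o d.totient m N ho2 (Nat.totient_pos.mpr hd0) hop hpm
      (Nat.totient_even hd2) hcount
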